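/- Let B be a left Banach A-module. Then B*A ⊆ wap_ℓ(B) if and only if AA** ⊆ Z_{B**}(A**), where AA** = {a·a'' : a ∈ A, a'' ∈ A**} with the product taken in the first Arens sense. -/
import Mathlib


open Filter Topology

/-- `arensHalf m y''` is the map `z' ↦ m**(y'', z')`, where
`⟨m*(z', x), y⟩ = ⟨z', m(x,y)⟩` and `⟨m**(y'', z'), x⟩ = ⟨y'', m*(z', x)⟩`. -/
noncomputable def arensHalf {X Y Z : Type*} [NormedAddCommGroup X] [NormedSpace ℝ X]
    [NormedAddCommGroup Y] [NormedSpace ℝ Y] [NormedAddCommGroup Z] [NormedSpace ℝ Z]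
    (m : X →L[ℝ] Y →L[ℝ] Z) (y'' : (Y →L[ℝ] ℝ) →L[ℝ] ℝ) :
    (Z →L[ℝ] ℝ) →L[ℝ] (X →L[ℝ] ℝ) :=
  (ContinuousLinearMap.compL ℝ X (Y →L[ℝ] ℝ) ℝ y'').comp
    (((ContinuousLinearMap.compL ℝ X (Y →L[ℝ] Z) (Y →L[ℝ] ℝ)).flip m).comp
      (ContinuousLinearMap.compL ℝ Y Z ℝ))

/-- The first Arens extension `m*** : X** × Y** → Z**` of a bounded bilinear map `m`,
defined by `⟨m***(x'', y''), z'⟩ = ⟨x'', m**(y'', z')⟩`. -/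
noncomputable def arens {X Y Z : Type*} [NormedAddCommGroup X] [NormedSpace ℝ X]
    [NormedAddCommGroup Y] [NormedSpace ℝ Y] [NormedAddCommGroup Z] [NormedSpace ℝ Z]
    (m : X →L[ℝ] Y →L[ℝ] Z) (x'' : (X →L[ℝ] ℝ) →L[ℝ] ℝ) (y'' : (Y →L[ℝ] ℝ) →L[ℝ] ℝ) :
    (Z →L[ℝ] ℝ) →L[ℝ] ℝ :=
  x''.comp (arensHalf m y'')

/-- Canonical embedding of a normed space into its double dual. -/
noncomputable def incl {X : Type*} [NormedAddCommGroup X] [NormedSpace ℝ X] (x : X) :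
    (X →L[ℝ] ℝ) →L[ℝ] ℝ :=
  ContinuousLinearMap.apply ℝ ℝ x

/-- `f : E** → F**` is weak*-to-weak* continuous. -/
def WWCont {E F : Type*} [NormedAddCommGroup E] [NormedSpace ℝ E]
    [NormedAddCommGroup F] [NormedSpace ℝ F]
    (f : ((E →L[ℝ] ℝ) →L[ℝ] ℝ) → ((F →L[ℝ] ℝ) →L[ℝ] ℝ)) : Prop :=
  ∀ (l : Filter ((E →L[ℝ] ℝ) →L[ℝ] ℝ)) (u : (E →L[ℝ] ℝ) →L[ℝ] ℝ),
    (∀ φ : E →L[ℝ] ℝ, Filter.Tendsto (fun v => v φ) l (nhds (u φ))) →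
    ∀ ψ : F →L[ℝ] ℝ, Filter.Tendsto (fun v => f v ψ) l (nhds (f u ψ))

lemma helly {B : Type*} [NormedAddCommGroup B] [NormedSpace ℝ B]
    (b'' : (B →L[ℝ] ℝ) →L[ℝ] ℝ) (s : Finset (B →L[ℝ] ℝ)) :
    ∃ b : B, ∀ φ ∈ s, φ b = b'' φ := by
  classical
  set T : B →ₗ[ℝ] (s → ℝ) := LinearMap.pi (fun φ => (φ.1 : B →ₗ[ℝ] ℝ)) with hT
  set y : s → ℝ := fun φ => b'' φ.1 with hy
  have hmem : y ∈ LinearMap.range T := by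
    rw [← Subspace.forall_mem_dualAnnihilator_apply_eq_zero_iff (LinearMap.range T)]
    intro φ hφ
    set e : s → (s → ℝ) := fun i j => if i = j then 1 else 0 with he
    have h1 : ∀ g : s → ℝ, φ g = ∑ i : s, g i • φ (e i) :=
      fun g => LinearMap.pi_apply_eq_sum_univ φ g
    have hΦ : (∑ i : s, φ (e i) • (i.1 : B →L[ℝ] ℝ)) = 0 := by
      ext b
      simp only [ContinuousLinearMap.sum_apply, ContinuousLinearMap.smul_apply,
        ContinuousLinearMap.zero_apply, smul_eq_mul]
      have h0 : φ (T b) = 0 :=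
        Submodule.mem_dualAnnihilator φ |>.mp hφ (T b) ⟨b, rfl⟩
      rw [h1 (T b)] at h0
      rw [← h0]
      refine Finset.sum_congr rfl fun i _ => ?_
      rw [smul_eq_mul, mul_comm]; rfl
    have h2 := congrArg b'' hΦ
    simp only [map_sum, map_smul, map_zero, smul_eq_mul] at h2
    rw [h1 y, ← h2]
    refine Finset.sum_congr rfl fun i _ => ?_
    rw [smul_eq_mul, mul_comm]
  obtain ⟨b, hb⟩ := hmem
  exact ⟨b, fun φ hφ => congrFun hb ⟨φ, hφ⟩⟩

lemma dense_filter {B : Type*} [NormedAddCommGroup B] [NormedSpace ℝ B]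
    (b'' : (B →L[ℝ] ℝ) →L[ℝ] ℝ) :
    ∃ l₀ : Filter B, l₀.NeBot ∧
      ∀ φ : B →L[ℝ] ℝ, Filter.Tendsto (fun b => φ b) l₀ (nhds (b'' φ)) := by
  classical
  set j : B → ((B →L[ℝ] ℝ) → ℝ) := fun b φ => φ b with hj
  set y : (B →L[ℝ] ℝ) → ℝ := fun φ => b'' φ with hy
  refine ⟨Filter.comap j (nhds y), ?_, ?_⟩
  · rw [Filter.comap_neBot_iff]
    intro t ht
    rw [nhds_pi, Filter.mem_pi] at ht
    obtain ⟨I, hIfin, V, hV, hVt⟩ := ht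
    obtain ⟨b, hb⟩ := helly b'' hIfin.toFinset
    refine ⟨b, hVt fun φ hφ => ?_⟩
    have : φ b = b'' φ := hb φ (hIfin.mem_toFinset.mpr hφ)
    rw [hj]; simp only []
    rw [this]
    exact mem_of_mem_nhds (hV φ)
  · intro φ
    exact ((continuous_apply φ).tendsto y).comp Filter.tendsto_comap

lemma arens_incl_eq {A B : Type*} [NormedAddCommGroup A] [NormedSpace ℝ A]
    [NormedAddCommGroup B] [NormedSpace ℝ B] (π : A →L[ℝ] B →L[ℝ] B)
    (c'' : (A →L[ℝ] ℝ) →L[ℝ] ℝ) (b : B) (ψ : B →L[ℝ] ℝ) :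
    arens π c'' (incl b) ψ = arens π.flip (incl b) c'' ψ := by
  exact congrArg c'' (by ext x; rfl)

lemma center_of_wwcont {A B : Type*} [NormedAddCommGroup A] [NormedSpace ℝ A]
    [NormedAddCommGroup B] [NormedSpace ℝ B] (π : A →L[ℝ] B →L[ℝ] B)
    (c'' : (A →L[ℝ] ℝ) →L[ℝ] ℝ)
    (hww : WWCont (fun b'' : (B →L[ℝ] ℝ) →L[ℝ] ℝ => arens π c'' b''))
    (b'' : (B →L[ℝ] ℝ) →L[ℝ] ℝ) (ψ : B →L[ℝ] ℝ) :
    arens π c'' b'' ψ = arens π.flip b'' c'' ψ := by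
  obtain ⟨l₀, hne, htend⟩ := dense_filter b''
  haveI := hne
  have h1 : ∀ φ : B →L[ℝ] ℝ,
      Filter.Tendsto (fun v => v φ) (Filter.map incl l₀) (nhds (b'' φ)) := by
    intro φ
    rw [Filter.tendsto_map'_iff]
    exact htend φ
  have hW := hww (Filter.map incl l₀) b'' h1 ψ
  rw [Filter.tendsto_map'_iff] at hW
  have hW' : Filter.Tendsto (fun b => arens π c'' (incl b) ψ) l₀
      (nhds (arens π.flip b'' c'' ψ)) := by
    have : (fun b => arens π c'' (incl b) ψ)
        = fun b => (arensHalf π.flip c'' ψ) b := by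
      funext b
      exact arens_incl_eq π c'' b ψ
    rw [this]
    exact htend (arensHalf π.flip c'' ψ)
  exact tendsto_nhds_unique hW hW'

section move
variable {A B : Type*}
    [NonUnitalNormedRing A] [NormedSpace ℝ A] [IsScalarTower ℝ A A] [SMulCommClass ℝ A A]
    [NormedAddCommGroup B] [NormedSpace ℝ B]
    (π : A →L[ℝ] B →L[ℝ] B) (hπ : ∀ (a₁ a₂ : A) (b : B), π (a₁ * a₂) b = π a₁ (π a₂ b))

include hπ in
lemma move_left (b' : B →L[ℝ] ℝ) (a : A) (a'' : (A →L[ℝ] ℝ) →L[ℝ] ℝ)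
    (b'' : (B →L[ℝ] ℝ) →L[ℝ] ℝ) :
    arens π a'' b'' (b'.comp (π a))
      = arens π (arens (ContinuousLinearMap.mul ℝ A) (incl a) a'') b'' b' := by
  refine congrArg a'' ?_
  ext x
  refine congrArg b'' ?_
  ext b
  exact (congrArg b' (hπ a x b)).symm

include hπ in
lemma move_right (b' : B →L[ℝ] ℝ) (a : A) (a'' : (A →L[ℝ] ℝ) →L[ℝ] ℝ)
    (b'' : (B →L[ℝ] ℝ) →L[ℝ] ℝ) :
    arens π.flip b'' a'' (b'.comp (π a))
      = arens π.flip b'' (arens (ContinuousLinearMap.mul ℝ A) (incl a) a'') b' := by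
  refine congrArg b'' ?_
  ext b
  refine congrArg a'' ?_
  ext x
  exact (congrArg b' (hπ a x b)).symm

end move

/-- for a left Banach `A`-module `B`, `B*A ⊆ wap_ℓ(B)` iff
`AA** ⊆ Z_{B**}(A**)` (products in the first Arens sense). -/
theorem wapl_iff_AAddstar_subset_center {A B : Type*}
    [NonUnitalNormedRing A] [NormedSpace ℝ A] [IsScalarTower ℝ A A] [SMulCommClass ℝ A A]
    [CompleteSpace A] [NormedAddCommGroup B] [NormedSpace ℝ B] [CompleteSpace B]
    (π : A →L[ℝ] B →L[ℝ] B) (hπ : ∀ (a₁ a₂ : A) (b : B), π (a₁ * a₂) b = π a₁ (π a₂ b)) :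
    (∀ (b' : B →L[ℝ] ℝ) (a : A) (a'' : (A →L[ℝ] ℝ) →L[ℝ] ℝ) (b'' : (B →L[ℝ] ℝ) →L[ℝ] ℝ),
        arens π a'' b'' (b'.comp (π a)) = arens π.flip b'' a'' (b'.comp (π a))) ↔
      (∀ (a : A) (a'' : (A →L[ℝ] ℝ) →L[ℝ] ℝ),
        WWCont (fun b'' : (B →L[ℝ] ℝ) →L[ℝ] ℝ =>
          arens π (arens (ContinuousLinearMap.mul ℝ A) (incl a) a'') b'')) := by
  constructor
  · intro h a a''
    set c'' := arens (ContinuousLinearMap.mul ℝ A) (incl a) a'' with hc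
    have key : ∀ (b'' : (B →L[ℝ] ℝ) →L[ℝ] ℝ) (b' : B →L[ℝ] ℝ),
        arens π c'' b'' b' = arens π.flip b'' c'' b' := by
      intro b'' b'
      rw [← move_left π hπ b' a a'' b'', ← move_right π hπ b' a a'' b'']
      exact h b' a a'' b''
    intro l u hl ψ
    have : (fun v : (B →L[ℝ] ℝ) →L[ℝ] ℝ => arens π c'' v ψ)
        = fun v => v (arensHalf π.flip c'' ψ) := by
      funext v
      exact key v ψ
    rw [this, key u ψ]
    exact hl (arensHalf π.flip c'' ψ)
  · intro h b' a a'' b''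
    rw [move_left π hπ b' a a'' b'', move_right π hπ b' a a'' b'']
    exact center_of_wwcont π _ (h a a'') b'' b'
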